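/- Let (Z1, Z2) be jointly Gaussian with zero means, variances σ1², σ2² > 0, and correlation ρ ∈ (-1,1). Writing r = σ1/σ2, we have P(|Z1| ≥ |Z2|) = (1/π)·[arctan((r - ρ)/√(1-ρ²)) + arctan((r + ρ)/√(1-ρ²))]. -/

import Mathlib

open MeasureTheory Real

section PredominanceAux

open Set Filter

lemma aux_integral_mul_exp {b : ℝ} (hb : 0 < b) :
    ∫ x in Set.Ioi (0:ℝ), x * Real.exp (-b * x ^ 2) = 1 / (2 * b) := by
  have hderiv : ∀ x ∈ Set.Ioi (0:ℝ),
      HasDerivAt (fun x : ℝ => -(Real.exp (-b * x ^ 2) / (2 * b)))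
        (x * Real.exp (-b * x ^ 2)) x := by
    intro x _
    have h1 : HasDerivAt (fun x : ℝ => -b * x ^ 2) (-b * (2 * x)) x := by
      simpa using (hasDerivAt_pow 2 x).const_mul (-b)
    have h2 := (Real.hasDerivAt_exp (-b * x ^ 2)).comp x h1
    have h3 : HasDerivAt (fun x : ℝ => -(Real.exp (-b * x ^ 2) / (2 * b)))
        (-(Real.exp (-b * x ^ 2) * (-b * (2 * x)) / (2 * b))) x := (h2.div_const (2 * b)).neg
    convert h3 using 1
    field_simp [hb.ne']
  have htend : Tendsto (fun x : ℝ => -(Real.exp (-b * x ^ 2) / (2 * b))) atTop (nhds 0) := by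
    have h1 : Tendsto (fun x : ℝ => -b * x ^ 2) atTop atBot :=
      Tendsto.const_mul_atTop_of_neg (neg_lt_zero.mpr hb) (tendsto_pow_atTop two_ne_zero)
    have h2 := (Real.tendsto_exp_atBot.comp h1).div_const (2 * b) |>.neg
    simpa using h2
  have hcont : ContinuousWithinAt (fun x : ℝ => -(Real.exp (-b * x ^ 2) / (2 * b)))
      (Set.Ici (0:ℝ)) 0 := by
    apply Continuous.continuousWithinAt; fun_prop
  have h := integral_Ioi_of_hasDerivAt_of_tendsto hcont hderiv
    ((integrable_mul_exp_neg_mul_sq hb).integrableOn) htend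
  rw [h]; simp

lemma aux_integral_arctan {a b : ℝ} (hb : 0 < b) :
    ∫ t in (-1:ℝ)..1, 1 / ((t - a) ^ 2 + b ^ 2) =
      (1 / b) * (Real.arctan ((1 - a) / b) + Real.arctan ((1 + a) / b)) := by
  have hb' : b ≠ 0 := hb.ne'
  have key : ∀ t : ℝ, HasDerivAt (fun t => (1 / b) * Real.arctan ((t - a) / b))
      (1 / ((t - a) ^ 2 + b ^ 2)) t := by
    intro t
    have h1 : HasDerivAt (fun t : ℝ => (t - a) / b) (1 / b) t := by
      simpa using ((hasDerivAt_id t).sub_const a).div_const b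
    have h2 := (Real.hasDerivAt_arctan ((t - a) / b)).comp t h1
    have h3 : HasDerivAt (fun t => (1 / b) * Real.arctan ((t - a) / b))
        (1 / b * (1 / (1 + ((t - a) / b) ^ 2) * (1 / b))) t := h2.const_mul (1 / b)
    convert h3 using 1
    have hpos : (0:ℝ) < (t - a) ^ 2 + b ^ 2 := by positivity
    field_simp [hb', hpos.ne']
    ring
  have hint : IntervalIntegrable (fun t : ℝ => 1 / ((t - a) ^ 2 + b ^ 2)) volume (-1) 1 := by
    apply Continuous.intervalIntegrable
    apply Continuous.div continuous_const (by fun_prop)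
    intro t; positivity
  rw [intervalIntegral.integral_eq_sub_of_hasDerivAt (fun t _ => key t) hint]
  rw [show ((-1:ℝ) - a) / b = -((1 + a) / b) by ring, Real.arctan_neg]
  ring

lemma aux_quad_lower (ρ x y : ℝ) (h : |ρ| ≤ 1) :
    (1 - |ρ|) * (x ^ 2 + y ^ 2) ≤ x ^ 2 - 2 * ρ * x * y + y ^ 2 := by
  rcases le_or_gt 0 ρ with hρ | hρ
  · rw [abs_of_nonneg hρ]; nlinarith [mul_nonneg hρ (sq_nonneg (x - y))]
  · rw [abs_of_neg hρ]; nlinarith [mul_nonneg (neg_nonneg.mpr hρ.le) (sq_nonneg (x + y))]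

lemma aux_const {σ₁ σ₂ ρ s : ℝ} (hσ₁ : σ₁ ≠ 0) (hσ₂ : σ₂ ≠ 0) (hs : s ≠ 0)
    (hπ : Real.pi ≠ 0) (hss : s * s = 1 - ρ ^ 2) :
    2 * ((1 / (2 * Real.pi * σ₁ * σ₂ * s)) * (1 - ρ ^ 2) * σ₂ ^ 2) * (1 / (σ₂ * s / σ₁)) =
      1 / Real.pi := by
  rw [← hss]
  field_simp

end PredominanceAux

/-- Joint density of a centered bivariate Gaussian with standard deviations
`σ₁, σ₂` and correlation `ρ`. -/
noncomputable def gaussPDF2 (σ₁ σ₂ ρ u v : ℝ) : ℝ :=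
  (1 / (2 * Real.pi * σ₁ * σ₂ * Real.sqrt (1 - ρ ^ 2))) *
    Real.exp (-(u ^ 2 / σ₁ ^ 2 - 2 * ρ * u * v / (σ₁ * σ₂) + v ^ 2 / σ₂ ^ 2) /
      (2 * (1 - ρ ^ 2)))

/-- Predominance probability: for a nondegenerate centered bivariate Gaussian
with standard deviations `σ₁, σ₂` and correlation `ρ ∈ (-1,1)`, writing
`r = σ₁/σ₂`, we have
`P(|Z₁| ≥ |Z₂|) = (1/π)(arctan((r-ρ)/√(1-ρ²)) + arctan((r+ρ)/√(1-ρ²)))`. -/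
theorem predominance_probability (σ₁ σ₂ ρ : ℝ) (hσ₁ : 0 < σ₁) (hσ₂ : 0 < σ₂)
    (hρ : ρ ∈ Set.Ioo (-1 : ℝ) 1) :
    ∫ p : ℝ × ℝ in {p : ℝ × ℝ | |p.2| ≤ |p.1|}, gaussPDF2 σ₁ σ₂ ρ p.1 p.2 =
      (1 / Real.pi) *
        (Real.arctan ((σ₁ / σ₂ - ρ) / Real.sqrt (1 - ρ ^ 2)) +
          Real.arctan ((σ₁ / σ₂ + ρ) / Real.sqrt (1 - ρ ^ 2))) := by
  obtain ⟨hρ1, hρ2⟩ := hρ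
  have hρabs : |ρ| < 1 := abs_lt.mpr ⟨hρ1, hρ2⟩
  have h1ρ : 0 < 1 - ρ ^ 2 := by nlinarith
  have h1ρ' : (1 - ρ ^ 2) ≠ 0 := h1ρ.ne'
  have hσ₁' : σ₁ ≠ 0 := hσ₁.ne'
  have hσ₂' : σ₂ ≠ 0 := hσ₂.ne'
  have hπ : (0:ℝ) < Real.pi := Real.pi_pos
  set s : ℝ := Real.sqrt (1 - ρ ^ 2) with hs_def
  have hs : 0 < s := Real.sqrt_pos.mpr h1ρ
  have hs' : s ≠ 0 := hs.ne'
  have hs2 : s ^ 2 = 1 - ρ ^ 2 := Real.sq_sqrt h1ρ.le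
  set C : ℝ := 1 / (2 * Real.pi * σ₁ * σ₂ * s) with hC_def
  have hC : 0 < C := by positivity
  set A : ℝ → ℝ :=
    fun t => (1 / σ₁ ^ 2 - 2 * ρ * t / (σ₁ * σ₂) + t ^ 2 / σ₂ ^ 2) / (2 * (1 - ρ ^ 2))
    with hA_def
  -- lower bound for quadratic forms
  have hQ : ∀ u v : ℝ, (1 - |ρ|) * (u ^ 2 / σ₁ ^ 2 + v ^ 2 / σ₂ ^ 2) ≤
      u ^ 2 / σ₁ ^ 2 - 2 * ρ * u * v / (σ₁ * σ₂) + v ^ 2 / σ₂ ^ 2 := by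
    intro u v
    calc (1 - |ρ|) * (u ^ 2 / σ₁ ^ 2 + v ^ 2 / σ₂ ^ 2)
        = (1 - |ρ|) * ((u / σ₁) ^ 2 + (v / σ₂) ^ 2) := by ring
      _ ≤ (u / σ₁) ^ 2 - 2 * ρ * (u / σ₁) * (v / σ₂) + (v / σ₂) ^ 2 :=
          aux_quad_lower ρ _ _ hρabs.le
      _ = u ^ 2 / σ₁ ^ 2 - 2 * ρ * u * v / (σ₁ * σ₂) + v ^ 2 / σ₂ ^ 2 := by ring
  set c : ℝ := (1 - |ρ|) / σ₁ ^ 2 / (2 * (1 - ρ ^ 2)) with hc_def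
  set c₂ : ℝ := (1 - |ρ|) / σ₂ ^ 2 / (2 * (1 - ρ ^ 2)) with hc₂_def
  have habs1 : (0:ℝ) < 1 - |ρ| := by linarith
  have hcpos : 0 < c := by rw [hc_def]; positivity
  have hc₂pos : 0 < c₂ := by rw [hc₂_def]; positivity
  have hAc : ∀ t, c ≤ A t := by
    intro t
    rw [hc_def, hA_def]
    apply (div_le_div_iff_of_pos_right (by linarith : (0:ℝ) < 2 * (1 - ρ ^ 2))).mpr
    have h := hQ 1 t
    ring_nf at h ⊢
    nlinarith [mul_nonneg habs1.le (mul_nonneg (sq_nonneg t) (sq_nonneg σ₂⁻¹))]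
  have hApos : ∀ t, 0 < A t := fun t => lt_of_lt_of_le hcpos (hAc t)
  set F : ℝ × ℝ → ℝ := fun p => gaussPDF2 σ₁ σ₂ ρ p.1 p.2 with hF_def
  have hFcont : Continuous F := by
    rw [hF_def]; unfold gaussPDF2; fun_prop
  -- pointwise formula along rays
  have hfA : ∀ u t : ℝ, F (u, u * t) = C * Real.exp (-(A t) * u ^ 2) := by
    intro u t
    rw [hF_def]
    show gaussPDF2 σ₁ σ₂ ρ u (u * t) = _
    unfold gaussPDF2
    rw [← hs_def, ← hC_def, hA_def]
    congr 1
    field_simp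
  -- nonnegativity and global bound
  have hFnonneg : ∀ p : ℝ × ℝ, 0 ≤ F p := by
    intro p
    rw [hF_def]
    show 0 ≤ gaussPDF2 σ₁ σ₂ ρ p.1 p.2
    unfold gaussPDF2
    positivity
  have hFbound : ∀ p : ℝ × ℝ,
      F p ≤ C * (Real.exp (-c * p.1 ^ 2) * Real.exp (-c₂ * p.2 ^ 2)) := by
    intro ⟨u, v⟩
    rw [hF_def]
    show gaussPDF2 σ₁ σ₂ ρ u v ≤ _
    unfold gaussPDF2
    rw [← hs_def, ← hC_def, ← Real.exp_add]
    apply mul_le_mul_of_nonneg_left _ hC.le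
    apply Real.exp_le_exp.mpr
    have h := hQ u v
    have h2 := (div_le_div_iff_of_pos_right (by linarith : (0:ℝ) < 2 * (1 - ρ ^ 2))).mpr h
    have e : -((1 - |ρ|) / σ₁ ^ 2 / (2 * (1 - ρ ^ 2))) * u ^ 2 +
        -((1 - |ρ|) / σ₂ ^ 2 / (2 * (1 - ρ ^ 2))) * v ^ 2 =
        -((1 - |ρ|) * (u ^ 2 / σ₁ ^ 2 + v ^ 2 / σ₂ ^ 2) / (2 * (1 - ρ ^ 2))) := by
      field_simp
      ring
    rw [hc_def, hc₂_def, neg_div, e]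
    exact neg_le_neg h2
  have hFint : Integrable F := by
    apply Integrable.mono'
      (((integrable_exp_neg_mul_sq hcpos).mul_prod (integrable_exp_neg_mul_sq hc₂pos)).const_mul C)
      hFcont.aestronglyMeasurable
    refine ae_of_all _ fun p => ?_
    rw [Real.norm_eq_abs, abs_of_nonneg (hFnonneg p)]
    exact hFbound p
  -- Step 1: Fubini for the region integral
  have hS : MeasurableSet {p : ℝ × ℝ | |p.2| ≤ |p.1|} :=
    measurableSet_le (measurable_snd.abs) (measurable_fst.abs)
  have step1 : (∫ p : ℝ × ℝ in {p : ℝ × ℝ | |p.2| ≤ |p.1|}, F p) =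
      ∫ u : ℝ, ∫ v in Set.Icc (-|u|) |u|, F (u, v) := by
    rw [← integral_indicator hS, Measure.volume_eq_prod,
      integral_prod _ (by rw [← Measure.volume_eq_prod]; exact hFint.indicator hS)]
    refine integral_congr_ae (ae_of_all _ fun u => ?_)
    beta_reduce
    rw [← integral_indicator measurableSet_Icc]
    refine integral_congr_ae (ae_of_all _ fun v => ?_)
    beta_reduce
    by_cases h : |v| ≤ |u|
    · rw [Set.indicator_of_mem (show (u, v) ∈ {p : ℝ × ℝ | |p.2| ≤ |p.1|} from h),
        Set.indicator_of_mem (by simpa [Set.mem_Icc] using abs_le.mp h)]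
    · rw [Set.indicator_of_notMem (show (u, v) ∉ {p : ℝ × ℝ | |p.2| ≤ |p.1|} from h),
        Set.indicator_of_notMem (by simpa [Set.mem_Icc, ← abs_le] using h)]
  set φ := fun x : ℝ => x * ∫ t in (-1:ℝ)..1, C * Real.exp (-(A t) * x ^ 2) with hφ_def
  -- Step 2: slice computation
  have claim2 : ∀ u : ℝ, u ≠ 0 → (∫ v in Set.Icc (-|u|) |u|, F (u, v)) = φ |u| := by
    intro u hu
    have h1 : (∫ v in Set.Icc (-|u|) |u|, F (u, v)) = ∫ v in (-|u|)..|u|, F (u, v) := by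
      rw [intervalIntegral.integral_of_le (neg_le_self (abs_nonneg u)),
        integral_Icc_eq_integral_Ioc]
    have hkey : (∫ v in (-u)..u, F (u, v)) = u * ∫ t in (-1:ℝ)..1, F (u, u * t) := by
      rw [intervalIntegral.integral_comp_mul_left (fun v => F (u, v)) hu]
      rw [mul_neg_one, mul_one, smul_eq_mul, ← mul_assoc, mul_inv_cancel₀ hu, one_mul]
    have h2 : (∫ v in (-|u|)..|u|, F (u, v)) = |u| * ∫ t in (-1:ℝ)..1, F (u, u * t) := by
      rcases abs_choice u with h | h
      · rw [h]; exact hkey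
      · rw [h, neg_neg, intervalIntegral.integral_symm, hkey]; ring
    rw [h1, h2, hφ_def]
    simp only [sq_abs]
    congr 1
    apply intervalIntegral.integral_congr
    intro t _
    exact hfA u t
  have step2 : (∫ u : ℝ, ∫ v in Set.Icc (-|u|) |u|, F (u, v)) = ∫ u : ℝ, φ |u| := by
    apply integral_congr_ae
    have h0 : ∀ᵐ u : ℝ, u ≠ 0 := by
      refine ae_iff.mpr ?_
      simp only [ne_eq, not_not]
      rw [show {a : ℝ | a = 0} = {(0:ℝ)} by ext x; simp]
      exact measure_singleton 0
    filter_upwards [h0] with u hu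
    exact claim2 u hu
  have step3 : (∫ u : ℝ, φ |u|) = 2 * ∫ u in Set.Ioi (0:ℝ), φ u := integral_comp_abs
  have step4 : (∫ u in Set.Ioi (0:ℝ), φ u) =
      ∫ u in Set.Ioi (0:ℝ), ∫ t in Set.Ioc (-1:ℝ) 1,
        C * (u * Real.exp (-(A t) * u ^ 2)) := by
    refine setIntegral_congr_fun measurableSet_Ioi fun u _ => ?_
    show φ u = _
    rw [hφ_def]
    beta_reduce
    rw [show (u * ∫ t in (-1:ℝ)..1, C * Real.exp (-(A t) * u ^ 2)) =
        ∫ t in (-1:ℝ)..1, C * (u * Real.exp (-(A t) * u ^ 2)) by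
      rw [← intervalIntegral.integral_const_mul]
      apply intervalIntegral.integral_congr
      intro t _
      ring]
    rw [intervalIntegral.integral_of_le (by norm_num : (-1:ℝ) ≤ 1)]
  have hAcont : Continuous A := by rw [hA_def]; fun_prop
  have hswap : (∫ u in Set.Ioi (0:ℝ), ∫ t in Set.Ioc (-1:ℝ) 1,
        C * (u * Real.exp (-(A t) * u ^ 2)))
      = ∫ t in Set.Ioc (-1:ℝ) 1, ∫ u in Set.Ioi (0:ℝ),
        C * (u * Real.exp (-(A t) * u ^ 2)) := by
    apply integral_integral_swap
    have hgint : Integrable (fun p : ℝ × ℝ => C * (|p.1| * Real.exp (-c * p.1 ^ 2)) * 1)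
        ((volume.restrict (Set.Ioi 0)).prod (volume.restrict (Set.Ioc (-1) 1))) := by
      have h := ((integrable_mul_exp_neg_mul_sq hcpos).norm.const_mul C)
      have h2 : Integrable (fun u : ℝ => C * (|u| * Real.exp (-c * u ^ 2))) volume := by
        refine h.congr (ae_of_all _ fun u => ?_)
        show C * ‖u * Real.exp (-c * u ^ 2)‖ = C * (|u| * Real.exp (-c * u ^ 2))
        rw [Real.norm_eq_abs, abs_mul, abs_of_pos (Real.exp_pos _)]
      have hone : Integrable (fun _ : ℝ => (1:ℝ)) (volume.restrict (Set.Ioc (-1:ℝ) 1)) :=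
        integrableOn_const measure_Ioc_lt_top.ne
      exact (h2.restrict).mul_prod hone
    apply Integrable.mono' hgint
    · apply Continuous.aestronglyMeasurable
      exact continuous_const.mul (continuous_fst.mul (Real.continuous_exp.comp
        (((hAcont.comp continuous_snd).neg).mul ((continuous_fst).pow 2))))
    · refine ae_of_all _ fun p => ?_
      show ‖C * (p.1 * Real.exp (-(A p.2) * p.1 ^ 2))‖ ≤ _
      rw [mul_one, Real.norm_eq_abs, abs_mul, abs_mul, abs_of_pos hC,
        abs_of_pos (Real.exp_pos _)]
      refine mul_le_mul_of_nonneg_left (mul_le_mul_of_nonneg_left ?_ (abs_nonneg _)) hC.le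
      apply Real.exp_le_exp.mpr
      have := mul_le_mul_of_nonneg_right (hAc p.2) (sq_nonneg p.1)
      linarith
  have step6 : ∀ t : ℝ, (∫ u in Set.Ioi (0:ℝ), C * (u * Real.exp (-(A t) * u ^ 2)))
      = C * (1 / (2 * A t)) := by
    intro t
    rw [integral_const_mul, aux_integral_mul_exp (hApos t)]
  set a0 := ρ * σ₂ / σ₁ with ha0_def
  set b0 := σ₂ * s / σ₁ with hb0_def
  have hb0 : 0 < b0 := by rw [hb0_def]; positivity
  have hAt : ∀ t : ℝ, C * (1 / (2 * A t)) =
      (C * (1 - ρ ^ 2) * σ₂ ^ 2) * (1 / ((t - a0) ^ 2 + b0 ^ 2)) := by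
    intro t
    have hAne : A t ≠ 0 := (hApos t).ne'
    have hid : (t - a0) ^ 2 + b0 ^ 2 = 2 * A t * ((1 - ρ ^ 2) * σ₂ ^ 2) := by
      rw [ha0_def, hb0_def, hA_def]
      have e1 : (σ₂ * s / σ₁) ^ 2 = σ₂ ^ 2 * (1 - ρ ^ 2) / σ₁ ^ 2 := by
        rw [div_pow, mul_pow, hs2]
      rw [e1]
      field_simp
      ring
    rw [hid]
    field_simp
  have step7 : (∫ t in Set.Ioc (-1:ℝ) 1, C * (1 / (2 * A t)))
      = (C * (1 - ρ ^ 2) * σ₂ ^ 2) *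
        ((1 / b0) * (Real.arctan ((1 - a0) / b0) + Real.arctan ((1 + a0) / b0))) := by
    rw [setIntegral_congr_fun measurableSet_Ioc (fun t _ => hAt t)]
    rw [integral_const_mul, ← intervalIntegral.integral_of_le (by norm_num : (-1:ℝ) ≤ 1)]
    rw [aux_integral_arctan hb0]
  have hchain : (∫ p : ℝ × ℝ in {p : ℝ × ℝ | |p.2| ≤ |p.1|}, F p)
      = 2 * ((C * (1 - ρ ^ 2) * σ₂ ^ 2) *
        ((1 / b0) * (Real.arctan ((1 - a0) / b0) + Real.arctan ((1 + a0) / b0)))) := by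
    rw [step1, step2, step3, step4, hswap, ← step7]
    congr 1
    refine setIntegral_congr_fun measurableSet_Ioc fun t _ => ?_
    exact step6 t
  have hX : (1 - a0) / b0 = (σ₁ / σ₂ - ρ) / s := by
    rw [ha0_def, hb0_def]; field_simp; try ring
  have hY : (1 + a0) / b0 = (σ₁ / σ₂ + ρ) / s := by
    rw [ha0_def, hb0_def]; field_simp; try ring
  rw [hchain, hX, hY]
  have hss : s * s = 1 - ρ ^ 2 := (pow_two s).symm.trans hs2
  have hconst : 2 * (C * (1 - ρ ^ 2) * σ₂ ^ 2) * (1 / b0) = 1 / Real.pi := by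
    rw [hC_def, hb0_def]
    exact aux_const hσ₁' hσ₂' hs' Real.pi_ne_zero hss
  linear_combination (Real.arctan ((σ₁ / σ₂ - ρ) / s) +
    Real.arctan ((σ₁ / σ₂ + ρ) / s)) * hconst
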